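/- arXiv:1506.03260 — 5 statements merged into one kernel-verified Lean document; each statement's English description precedes it below -/
import Mathlib

section
/- Let X, Y be normed spaces, V : X → Y a bounded linear operator, and {V_ν}_{ν ∈ N} a finite family of bounded linear operators from X to Y with |N| elements. Then for any n ∈ ℕ, e_{n + ⌊log₂|N|⌋ + 1}(V) ≤ sup_{ν ∈ N} e_n(V_ν) + sup_{x ∈ B_X} inf_{ν ∈ N} ‖Vx − V_ν x‖_Y. -/
open Set Metric

/-- The `k`-th entropy number of a continuous linear operator `T : X → Y`. -/
noncomputable def entropyNumber {X Y : Type*} [NormedAddCommGroup X] [NormedSpace ℝ X]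
    [NormedAddCommGroup Y] [NormedSpace ℝ Y] (T : X →L[ℝ] Y) (k : ℕ) : ℝ :=
  sInf {ε : ℝ | 0 < ε ∧ ∃ y : Fin (2 ^ (k - 1)) → Y,
    (⇑T) '' Metric.closedBall 0 1 ⊆ ⋃ i, Metric.closedBall (y i) ε}

/-- Any covering indexed by a finite type of small enough cardinality yields membership
in the defining set of the entropy number. -/
lemma entropy_mem_of_cover {X Y : Type*} [NormedAddCommGroup X] [NormedSpace ℝ X]
    [NormedAddCommGroup Y] [NormedSpace ℝ Y] (T : X →L[ℝ] Y) (k : ℕ)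
    {κ : Type*} [Fintype κ] [Nonempty κ] (hcard : Fintype.card κ ≤ 2 ^ (k - 1))
    {r : ℝ} (hr : 0 < r) (y : κ → Y)
    (hcov : (⇑T) '' Metric.closedBall 0 1 ⊆ ⋃ i, Metric.closedBall (y i) r) :
    r ∈ {ε : ℝ | 0 < ε ∧ ∃ y : Fin (2 ^ (k - 1)) → Y,
      (⇑T) '' Metric.closedBall 0 1 ⊆ ⋃ i, Metric.closedBall (y i) ε} := by
  classical
  refine ⟨hr, ?_⟩
  have hcard' : Fintype.card κ ≤ Fintype.card (Fin (2 ^ (k - 1))) := by simpa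
  obtain ⟨e⟩ := Function.Embedding.nonempty_of_card_le hcard'
  have hinj : Function.Injective e := e.injective
  refine ⟨fun j => y (Function.invFun e j), hcov.trans ?_⟩
  refine iUnion_subset fun i => ?_
  refine subset_iUnion_of_subset (e i) ?_
  simp only [Function.leftInverse_invFun hinj i]
  exact subset_rfl

theorem entropyNumber_nonneg {X Y : Type*} [NormedAddCommGroup X] [NormedSpace ℝ X]
    [NormedAddCommGroup Y] [NormedSpace ℝ Y] (T : X →L[ℝ] Y) (k : ℕ) :
    0 ≤ entropyNumber T k :=
  Real.sInf_nonneg fun _ hx => hx.1.le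

lemma entropy_set_nonempty {X Y : Type*} [NormedAddCommGroup X] [NormedSpace ℝ X]
    [NormedAddCommGroup Y] [NormedSpace ℝ Y] (T : X →L[ℝ] Y) (k : ℕ) :
    Set.Nonempty {ε : ℝ | 0 < ε ∧ ∃ y : Fin (2 ^ (k - 1)) → Y,
      (⇑T) '' Metric.closedBall 0 1 ⊆ ⋃ i, Metric.closedBall (y i) ε} := by
  refine ⟨‖T‖ + 1, by positivity, fun _ => 0, ?_⟩
  rintro _ ⟨x, hx, rfl⟩
  have hx1 : ‖x‖ ≤ 1 := by simpa using mem_closedBall_iff_norm.mp hx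
  refine mem_iUnion.mpr ⟨⟨0, Nat.pow_pos (by norm_num)⟩, ?_⟩
  simp only [mem_closedBall, dist_zero_right]
  calc ‖T x‖ ≤ ‖T‖ * ‖x‖ := T.le_opNorm x
    _ ≤ ‖T‖ * 1 := by
        exact mul_le_mul_of_nonneg_left hx1 (norm_nonneg _)
    _ ≤ ‖T‖ + 1 := by linarith [norm_nonneg T]

/-- Lifshits' lemma: for a finite family `{V_ν}_{ν ∈ N}` of operators,
`e_{n + ⌊log₂ |N|⌋ + 1}(V) ≤ sup_ν e_n(V_ν) + sup_{x ∈ B_X} inf_ν ‖Vx − V_ν x‖`. -/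
theorem entropyNumber_finite_family {X Y : Type*}
    [NormedAddCommGroup X] [NormedSpace ℝ X]
    [NormedAddCommGroup Y] [NormedSpace ℝ Y]
    {ι : Type*} [Fintype ι] [Nonempty ι]
    (V : X →L[ℝ] Y) (Vf : ι → X →L[ℝ] Y) (n : ℕ) :
    entropyNumber V (n + Nat.log 2 (Fintype.card ι) + 1) ≤
      (⨆ ν : ι, entropyNumber (Vf ν) n) +
        ⨆ x : Metric.closedBall (0 : X) 1, ⨅ ν : ι, ‖V x - Vf ν x‖ := by
  classical
  set L := Nat.log 2 (Fintype.card ι) with hL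
  set a := ⨆ ν : ι, entropyNumber (Vf ν) n with ha
  set b := ⨆ x : Metric.closedBall (0 : X) 1, ⨅ ν : ι, ‖V x - Vf ν x‖ with hb
  -- basic nonnegativity facts
  have hbdda : BddAbove (Set.range fun ν : ι => entropyNumber (Vf ν) n) :=
    Set.Finite.bddAbove (Set.finite_range _)
  have ha_nonneg : 0 ≤ a := by
    refine le_trans (entropyNumber_nonneg (Vf (Classical.arbitrary ι)) n) ?_
    exact le_ciSup hbdda _
  have hbdd_inf : ∀ x : X, BddBelow (Set.range fun ν : ι => ‖V x - Vf ν x‖) :=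
    fun x => ⟨0, by rintro _ ⟨ν, rfl⟩; positivity⟩
  have hbddb : BddAbove (Set.range fun x : Metric.closedBall (0 : X) 1 =>
      ⨅ ν : ι, ‖V x - Vf ν x‖) := by
    refine ⟨‖V - Vf (Classical.arbitrary ι)‖, ?_⟩
    rintro _ ⟨⟨x, hx⟩, rfl⟩
    have hx1 : ‖x‖ ≤ 1 := by simpa using mem_closedBall_iff_norm.mp hx
    refine le_trans (ciInf_le (hbdd_inf x) (Classical.arbitrary ι)) ?_
    have := (V - Vf (Classical.arbitrary ι)).le_opNorm x
    simp only [ContinuousLinearMap.sub_apply] at this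
    calc ‖V x - Vf (Classical.arbitrary ι) x‖
        ≤ ‖V - Vf (Classical.arbitrary ι)‖ * ‖x‖ := this
      _ ≤ ‖V - Vf (Classical.arbitrary ι)‖ * 1 :=
          mul_le_mul_of_nonneg_left hx1 (norm_nonneg _)
      _ = _ := mul_one _
  have hb_nonneg : 0 ≤ b := by
    have h0 : (0 : X) ∈ Metric.closedBall (0 : X) 1 := by simp
    refine le_trans ?_ (le_ciSup hbddb ⟨0, h0⟩)
    exact le_ciInf fun ν => by positivity
  -- each x in the ball admits ν with ‖Vx - Vν x‖ ≤ b
  have hbx : ∀ x ∈ Metric.closedBall (0 : X) 1, ∃ ν : ι, ‖V x - Vf ν x‖ ≤ b := by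
    intro x hx
    obtain ⟨ν₀, hν₀⟩ := Finite.exists_min fun ν : ι => ‖V x - Vf ν x‖
    refine ⟨ν₀, ?_⟩
    have h1 : ‖V x - Vf ν₀ x‖ ≤ ⨅ ν : ι, ‖V x - Vf ν x‖ := le_ciInf hν₀
    exact h1.trans (le_ciSup hbddb ⟨x, hx⟩)
  -- main estimate with slack η
  have key : ∀ η : ℝ, 0 < η →
      entropyNumber V (n + L + 1) ≤ a + b + η := by
    intro η hη
    -- choose near-optimal coverings for each Vf ν
    have hchoice : ∀ ν : ι, ∃ ε : ℝ, (0 < ε ∧ ∃ y : Fin (2 ^ (n - 1)) → Y,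
        (⇑(Vf ν)) '' Metric.closedBall 0 1 ⊆ ⋃ i, Metric.closedBall (y i) ε) ∧
        ε < a + η := by
      intro ν
      obtain ⟨ε, hmem, hlt⟩ := Real.lt_sInf_add_pos (entropy_set_nonempty (Vf ν) n) hη
      have hlt' : ε < entropyNumber (Vf ν) n + η := hlt
      refine ⟨ε, hmem, ?_⟩
      have : entropyNumber (Vf ν) n ≤ a := le_ciSup hbdda ν
      linarith
    choose ε hε hεlt using hchoice
    choose y hy using fun ν => (hε ν).2
    have hr : (0 : ℝ) < a + b + η := by positivity
    have hfin : a + b + η ∈ {ε : ℝ | 0 < ε ∧ ∃ y : Fin (2 ^ (n + L + 1 - 1)) → Y,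
        (⇑V) '' Metric.closedBall 0 1 ⊆ ⋃ i, Metric.closedBall (y i) ε} := by
      rcases n with _ | m
      · -- n = 0 : single ball centered at the origin
        refine entropy_mem_of_cover (κ := Fin 1) V (0 + L + 1)
          (by simpa using Nat.one_le_two_pow) hr (fun _ => (0 : Y)) ?_
        rintro _ ⟨x, hx, rfl⟩
        obtain ⟨ν, hν⟩ := hbx x hx
        -- bound ‖Vf ν x‖ by ε ν using symmetry
        have hxm : -x ∈ Metric.closedBall (0 : X) 1 := by
          simpa [mem_closedBall_iff_norm] using mem_closedBall_iff_norm.mp hx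
        have h1 := hy ν ⟨x, hx, rfl⟩
        have h2 := hy ν ⟨-x, hxm, rfl⟩
        rw [mem_iUnion] at h1 h2
        obtain ⟨i, hi⟩ := h1
        obtain ⟨j, hj⟩ := h2
        have hij : j = i := by
          have hj2 := j.2
          have hi2 := i.2
          norm_num at hj2 hi2
          exact Fin.ext (by omega)
        subst hij
        rw [mem_closedBall, dist_eq_norm] at hi hj
        have hj' : ‖Vf ν x + y ν j‖ ≤ ε ν := by
          have : Vf ν (-x) - y ν j = -(Vf ν x + y ν j) := by
            simp [map_neg]; abel
          rwa [this, norm_neg] at hj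
        have hnorm : ‖Vf ν x‖ ≤ ε ν := by
          have hsum : Vf ν x - y ν j + (Vf ν x + y ν j) = (2 : ℝ) • Vf ν x := by
            rw [two_smul]; abel
          have := norm_add_le (Vf ν x - y ν j) (Vf ν x + y ν j)
          rw [hsum, norm_smul] at this
          simp only [Real.norm_ofNat] at this
          linarith
        refine mem_iUnion.mpr ⟨0, ?_⟩
        rw [mem_closedBall, dist_zero_right]
        have : ‖V x‖ ≤ ‖V x - Vf ν x‖ + ‖Vf ν x‖ := by
          simpa using norm_add_le (V x - Vf ν x) (Vf ν x)
        have := hεlt ν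
        linarith
      · -- n = m + 1
        have hcard : Fintype.card (ι × Fin (2 ^ m)) ≤ 2 ^ (m + 1 + L + 1 - 1) := by
          have h1 : Fintype.card ι < 2 ^ (L + 1) :=
            Nat.lt_pow_succ_log_self (by norm_num) _
          have : Fintype.card (ι × Fin (2 ^ m)) = Fintype.card ι * 2 ^ m := by simp
          rw [this]
          calc Fintype.card ι * 2 ^ m ≤ 2 ^ (L + 1) * 2 ^ m :=
                Nat.mul_le_mul_right _ h1.le
            _ = 2 ^ (L + 1 + m) := by rw [← pow_add]
            _ = 2 ^ (m + 1 + L + 1 - 1) := by congr 1; omega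
        refine entropy_mem_of_cover V (m + 1 + L + 1) hcard hr
          (fun p => y p.1 p.2) ?_
        rintro _ ⟨x, hx, rfl⟩
        obtain ⟨ν, hν⟩ := hbx x hx
        have h1 := hy ν ⟨x, hx, rfl⟩
        rw [mem_iUnion] at h1
        obtain ⟨i, hi⟩ := h1
        rw [mem_closedBall, dist_eq_norm] at hi
        refine mem_iUnion.mpr ⟨(ν, i), ?_⟩
        rw [mem_closedBall, dist_eq_norm]
        have : ‖V x - y ν i‖ ≤ ‖V x - Vf ν x‖ + ‖Vf ν x - y ν i‖ := by
          simpa using norm_add_le (V x - Vf ν x) (Vf ν x - y ν i)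
        have := hεlt ν
        linarith
    exact csInf_le ⟨0, fun x hx => hx.1.le⟩ hfin
  -- conclude
  have := le_of_forall_pos_le_add (fun η hη => key η hη)
  linarith [this]
end

section
/- Let 1 ≤ p < q < ∞, and let {ε_t}_{t=t₁}^{t₂} be nonnegative reals with ∑_t ε_t ≤ 1, and n ∈ ℕ with n ≥ 1. Define n_t = ⌈n · 2^{−t} ε_t⌉ if ε_t > 0 and n_t = 1 if ε_t = 0. Then ∑_{t=t₁}^{t₂} 2^{t(1 − q/p)} ε_t^{q/p} n_t^{1 − q/p} ≤ C(p,q) (n^{1 − q/p} + 2^{t₁ (1 − q/p)}). -/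
open Finset Real

/-- The weighted sum estimate from the proof of the main lemma: with
`n_t = ⌈n 2^{-t} ε_t⌉` (and `n_t = 1` if `ε_t = 0`), one has
`∑_t 2^{t(1-q/p)} ε_t^{q/p} n_t^{1-q/p} ≤ C(p,q)(n^{1-q/p} + 2^{t₁(1-q/p)})`. -/
theorem weighted_sum_estimate (p q : ℝ) (hp : 1 ≤ p) (hpq : p < q) :
    ∃ C : ℝ, 0 < C ∧ ∀ (t₁ t₂ : ℕ) (eps : ℕ → ℝ) (n : ℕ) (nt : ℕ → ℕ),
      (∀ t, 0 ≤ eps t) →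
      (∑ t ∈ Finset.Icc t₁ t₂, eps t) ≤ 1 →
      1 ≤ n →
      (∀ t, nt t = if 0 < eps t then ⌈(n : ℝ) * (2:ℝ) ^ (-(t:ℝ)) * eps t⌉₊ else 1) →
      ∑ t ∈ Finset.Icc t₁ t₂,
          (2:ℝ) ^ ((t:ℝ) * (1 - q / p)) * eps t ^ (q / p) * (nt t : ℝ) ^ (1 - q / p)
        ≤ C * ((n : ℝ) ^ (1 - q / p) + (2:ℝ) ^ ((t₁:ℝ) * (1 - q / p))) := by
  have hp0 : 0 < p := lt_of_lt_of_le one_pos hp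
  set α : ℝ := q / p with hα
  have hα1 : 1 < α := (one_lt_div hp0).mpr hpq
  set β : ℝ := 1 - α with hβ
  have hβ0 : β < 0 := by linarith
  set r : ℝ := (2:ℝ) ^ β with hr
  have hr0 : 0 < r := Real.rpow_pos_of_pos two_pos _
  have hr1 : r < 1 := Real.rpow_lt_one_of_one_lt_of_neg one_lt_two hβ0
  refine ⟨1 + (1 - r)⁻¹, by have : (0:ℝ) < (1 - r)⁻¹ := inv_pos.mpr (by linarith); linarith, ?_⟩
  intro t₁ t₂ eps n nt heps hsum hn hnt
  have hnpos : (0:ℝ) < n := by exact_mod_cast hn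
  -- pointwise bound
  have key : ∀ t ∈ Finset.Icc t₁ t₂,
      (2:ℝ) ^ ((t:ℝ) * β) * eps t ^ α * (nt t : ℝ) ^ β
        ≤ (n:ℝ) ^ β * eps t + (2:ℝ) ^ ((t:ℝ) * β) := by
    intro t ht
    have heps1 : eps t ≤ 1 :=
      le_trans (Finset.single_le_sum (fun i _ => heps i) ht) hsum
    rcases eq_or_lt_of_le (heps t) with h0 | hpos
    · rw [← h0, Real.zero_rpow (by intro h; rw [h] at hα1; linarith : α ≠ 0)]
      have : (0:ℝ) < (2:ℝ) ^ ((t:ℝ) * β) := Real.rpow_pos_of_pos two_pos _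
      nlinarith [Real.rpow_pos_of_pos (show (0:ℝ) < nt t by
        rw [hnt t]; split
        · exact_mod_cast Nat.ceil_pos.mpr (by positivity)
        · norm_num) β]
    · set x : ℝ := (n : ℝ) * (2:ℝ) ^ (-(t:ℝ)) * eps t with hx
      have hx0 : 0 < x := by positivity
      have hntx : nt t = ⌈x⌉₊ := by rw [hnt t, if_pos hpos]
      rcases le_or_gt 1 x with hx1 | hx1
      · -- main case: nt ≥ x ≥ 1
        have hle : x ≤ (nt t : ℝ) := by rw [hntx]; exact Nat.le_ceil x
        have h1 : ((nt t : ℝ)) ^ β ≤ x ^ β :=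
          Real.rpow_le_rpow_of_nonpos hx0 hle hβ0.le
        have hxβ : x ^ β = (n:ℝ) ^ β * (2:ℝ) ^ (-(t:ℝ) * β) * eps t ^ β := by
          rw [hx, Real.mul_rpow (by positivity) (heps t),
            Real.mul_rpow (by positivity) (by positivity),
            ← Real.rpow_mul (by norm_num : (0:ℝ) ≤ 2)]
        have hmain : (2:ℝ) ^ ((t:ℝ) * β) * eps t ^ α * x ^ β = (n:ℝ) ^ β * eps t := by
          rw [hxβ]
          have h2 : (2:ℝ) ^ ((t:ℝ) * β) * (2:ℝ) ^ (-(t:ℝ) * β) = 1 := by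
            rw [← Real.rpow_add two_pos]
            ; norm_num
          have h3 : eps t ^ α * eps t ^ β = eps t := by
            rw [← Real.rpow_add hpos]
            simp [hβ]
          calc (2:ℝ) ^ ((t:ℝ) * β) * eps t ^ α *
                ((n:ℝ) ^ β * (2:ℝ) ^ (-(t:ℝ) * β) * eps t ^ β)
              = (n:ℝ) ^ β * (eps t ^ α * eps t ^ β) *
                ((2:ℝ) ^ ((t:ℝ) * β) * (2:ℝ) ^ (-(t:ℝ) * β)) := by ring
            _ = (n:ℝ) ^ β * eps t := by rw [h2, h3]; ring
        have := mul_le_mul_of_nonneg_left h1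
          (by positivity : (0:ℝ) ≤ (2:ℝ) ^ ((t:ℝ) * β) * eps t ^ α)
        rw [hmain] at this
        have h2t : (0:ℝ) < (2:ℝ) ^ ((t:ℝ) * β) := Real.rpow_pos_of_pos two_pos _
        linarith
      · -- small case: nt = 1
        have hnt1 : nt t = 1 := by
          rw [hntx]
          have h1 : ⌈x⌉₊ ≤ 1 := Nat.ceil_le.mpr (by push_cast; linarith)
          have h2 : 1 ≤ ⌈x⌉₊ := Nat.one_le_ceil_iff.mpr hx0
          omega
        rw [hnt1]
        simp only [Nat.cast_one, Real.one_rpow, mul_one]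
        have heβ : eps t ^ α ≤ 1 :=
          Real.rpow_le_one (heps t) heps1 (by linarith)
        have h2t : (0:ℝ) < (2:ℝ) ^ ((t:ℝ) * β) := Real.rpow_pos_of_pos two_pos _
        have hnβ : (0:ℝ) < (n:ℝ) ^ β := Real.rpow_pos_of_pos hnpos β
        nlinarith [mul_nonneg hnβ.le (heps t)]
  calc ∑ t ∈ Finset.Icc t₁ t₂,
          (2:ℝ) ^ ((t:ℝ) * β) * eps t ^ α * (nt t : ℝ) ^ β
      ≤ ∑ t ∈ Finset.Icc t₁ t₂, ((n:ℝ) ^ β * eps t + (2:ℝ) ^ ((t:ℝ) * β)) :=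
        Finset.sum_le_sum key
    _ = (n:ℝ) ^ β * (∑ t ∈ Finset.Icc t₁ t₂, eps t)
        + ∑ t ∈ Finset.Icc t₁ t₂, (2:ℝ) ^ ((t:ℝ) * β) := by
        rw [Finset.sum_add_distrib, Finset.mul_sum]
    _ ≤ (n:ℝ) ^ β * 1 + (1 - r)⁻¹ * (2:ℝ) ^ ((t₁:ℝ) * β) := by
        apply add_le_add
        · exact mul_le_mul_of_nonneg_left hsum (Real.rpow_pos_of_pos hnpos _).le
        · -- geometric sum
          have hrt : ∀ t : ℕ, (2:ℝ) ^ ((t:ℝ) * β) = r ^ t := by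
            intro t
            rw [hr, ← Real.rpow_natCast ((2:ℝ)^β) t,
              ← Real.rpow_mul (by norm_num : (0:ℝ) ≤ 2), mul_comm]
          simp only [hrt]
          have : ∑ t ∈ Finset.Icc t₁ t₂, r ^ t
              = r ^ t₁ * ∑ i ∈ Finset.range (t₂ + 1 - t₁), r ^ i := by
            rw [show Finset.Icc t₁ t₂ = Finset.Ico t₁ (t₂ + 1) by
              rw [Finset.Ico_add_one_right_eq_Icc], Finset.sum_Ico_eq_sum_range,
              Finset.mul_sum]
            exact Finset.sum_congr rfl fun i _ => pow_add r t₁ i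
          rw [this, mul_comm ((1 - r)⁻¹)]
          refine mul_le_mul_of_nonneg_left ?_ (pow_nonneg hr0.le t₁)
          calc ∑ i ∈ Finset.range (t₂ + 1 - t₁), r ^ i
              ≤ ∑' i : ℕ, r ^ i := Summable.sum_le_tsum _ (fun i _ => by positivity)
                (summable_geometric_of_lt_one hr0.le hr1)
            _ = (1 - r)⁻¹ := tsum_geometric_of_lt_one hr0.le hr1
    _ ≤ (1 + (1 - r)⁻¹) * ((n:ℝ) ^ β + (2:ℝ) ^ ((t₁:ℝ) * β)) := by
        have h1 : (0:ℝ) ≤ (n:ℝ) ^ β := (Real.rpow_pos_of_pos hnpos _).le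
        have h2 : (0:ℝ) ≤ (2:ℝ) ^ ((t₁:ℝ) * β) := (Real.rpow_pos_of_pos two_pos _).le
        have h3 : (0:ℝ) < (1 - r)⁻¹ := inv_pos.mpr (by linarith)
        nlinarith
end

section
/- Let 1 ≤ p ≤ q ≤ ∞ and ν ∈ ℕ. For 1 ≤ k ≤ log₂ ν, the entropy numbers of the identity id : l_p^ν → l_q^ν satisfy c(p,q) ≤ e_k(id) ≤ C(p,q) for constants 0 < c(p,q) ≤ C(p,q) depending only on p, q. -/
open Set Metric

/-- The identity map `l_p^ν → l_q^ν` as a continuous linear map. -/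
noncomputable def lpId (p q : ENNReal) [Fact (1 ≤ p)] [Fact (1 ≤ q)] (ν : ℕ) :
    PiLp p (fun _ : Fin ν => ℝ) →L[ℝ] PiLp q (fun _ : Fin ν => ℝ) :=
  LinearMap.toContinuousLinearMap
    (((WithLp.linearEquiv q ℝ (Fin ν → ℝ)).symm.toLinearMap).comp
      ((WithLp.linearEquiv p ℝ (Fin ν → ℝ)).toLinearMap))

/-- Each coordinate is bounded by the `l_q` norm. -/
lemma piLp_coord_le (q : ENNReal) [Fact (1 ≤ q)] {ν : ℕ}
    (x : PiLp q (fun _ : Fin ν => ℝ)) (i : Fin ν) : ‖x i‖ ≤ ‖x‖ := by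
  rcases q.dichotomy with rfl | h
  · rw [PiLp.norm_eq_ciSup]
    exact le_ciSup (Finite.bddAbove_range fun j => ‖x j‖) i
  · have hq : 0 < q.toReal := lt_of_lt_of_le one_pos h
    rw [PiLp.norm_eq_sum hq]
    calc ‖x i‖ = (‖x i‖ ^ q.toReal) ^ (1 / q.toReal) := by
          rw [← Real.rpow_mul (norm_nonneg _), mul_one_div_cancel hq.ne', Real.rpow_one]
      _ ≤ (∑ j, ‖x j‖ ^ q.toReal) ^ (1 / q.toReal) := by
          apply Real.rpow_le_rpow (Real.rpow_nonneg (norm_nonneg _) _)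
          · exact Finset.single_le_sum (fun j _ => Real.rpow_nonneg (norm_nonneg _) _)
              (Finset.mem_univ i)
          · positivity

lemma lpId_apply_coord (p q : ENNReal) [Fact (1 ≤ p)] [Fact (1 ≤ q)] {ν : ℕ}
    (x : PiLp p (fun _ : Fin ν => ℝ)) (i : Fin ν) : (lpId p q ν x) i = x i := rfl

/-- The identity `l_p → l_q` is a contraction when `p ≤ q`. -/
lemma lpId_norm_apply_le (p q : ENNReal) [Fact (1 ≤ p)] [Fact (1 ≤ q)] (hpq : p ≤ q) {ν : ℕ}
    (x : PiLp p (fun _ : Fin ν => ℝ)) : ‖lpId p q ν x‖ ≤ ‖x‖ := by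
  rcases p.dichotomy with rfl | hp
  · have hq : q = ⊤ := top_le_iff.mp hpq
    subst hq
    rw [PiLp.norm_eq_ciSup, PiLp.norm_eq_ciSup]
    exact le_of_eq rfl
  · have hp' : 0 < p.toReal := lt_of_lt_of_le one_pos hp
    rcases q.dichotomy with rfl | hq
    · rw [PiLp.norm_eq_ciSup]
      rcases isEmpty_or_nonempty (Fin ν) with hE | hNE
      · haveI := hE
        rw [Real.iSup_of_isEmpty]
        exact norm_nonneg _
      · exact ciSup_le fun i => piLp_coord_le p x i
    · have hq' : 0 < q.toReal := lt_of_lt_of_le one_pos hq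
      have hpq' : p.toReal ≤ q.toReal :=
        ENNReal.toReal_mono (by rintro rfl; simp at hq') hpq
      by_cases hx0 : x = 0
      · subst hx0; simp
      have hr : 0 < ‖x‖ := norm_pos_iff.mpr hx0
      set y : PiLp p (fun _ : Fin ν => ℝ) := ‖x‖⁻¹ • x with hy
      have hyn : ‖y‖ = 1 := by
        rw [hy, norm_smul, norm_inv, norm_norm, inv_mul_cancel₀ hr.ne']
      -- coordinates of y are at most 1
      have hcoord : ∀ i, ‖y i‖ ≤ 1 := fun i => (piLp_coord_le p y i).trans hyn.le
      -- sum of p-th powers equals 1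
      have hsum : ∑ i, ‖y i‖ ^ p.toReal = 1 := by
        have h1 := hyn
        rw [PiLp.norm_eq_sum hp'] at h1
        have hnn : 0 ≤ ∑ i, ‖y i‖ ^ p.toReal :=
          Finset.sum_nonneg fun i _ => Real.rpow_nonneg (norm_nonneg _) _
        have h2 := congrArg (· ^ p.toReal) h1
        simp only [← Real.rpow_mul hnn, one_div, inv_mul_cancel₀ hp'.ne', Real.rpow_one,
          Real.one_rpow] at h2
        exact h2
      have hqsum : ∑ i, ‖y i‖ ^ q.toReal ≤ 1 := by
        rw [← hsum]
        apply Finset.sum_le_sum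
        intro i _
        rcases eq_or_lt_of_le (norm_nonneg (y i)) with h0 | h0
        · rw [← h0, Real.zero_rpow hq'.ne', Real.zero_rpow hp'.ne']
        · exact Real.rpow_le_rpow_of_exponent_ge h0 (hcoord i) hpq'
      have hy1 : ‖lpId p q ν y‖ ≤ 1 := by
        rw [PiLp.norm_eq_sum hq']
        apply Real.rpow_le_one (Finset.sum_nonneg fun i _ => Real.rpow_nonneg (norm_nonneg _) _)
        · simpa only [lpId_apply_coord] using hqsum
        · positivity
      have h4 : ‖lpId p q ν y‖ = ‖x‖⁻¹ * ‖lpId p q ν x‖ := by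
        rw [hy, map_smul, norm_smul, norm_inv, norm_norm]
      rw [h4] at hy1
      calc ‖lpId p q ν x‖ = ‖x‖ * (‖x‖⁻¹ * ‖lpId p q ν x‖) := by
            field_simp
        _ ≤ ‖x‖ * 1 := mul_le_mul_of_nonneg_left hy1 hr.le
        _ = ‖x‖ := mul_one _

/-- Small-`k` regime of Schütt's theorem: for `1 ≤ k ≤ log₂ ν`,
`c(p,q) ≤ e_k(id : l_p^ν → l_q^ν) ≤ C(p,q)`. -/
theorem schuett_small_k (p q : ENNReal) [Fact (1 ≤ p)] [Fact (1 ≤ q)] (hpq : p ≤ q) :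
    ∃ c C : ℝ, 0 < c ∧ c ≤ C ∧ ∀ (ν : ℕ), 1 ≤ ν → ∀ k : ℕ, 1 ≤ k →
      (k : ℝ) ≤ Real.logb 2 ν →
      c ≤ entropyNumber (lpId p q ν) k ∧ entropyNumber (lpId p q ν) k ≤ C := by
  refine ⟨1/2, 1, by norm_num, by norm_num, ?_⟩
  intro ν hν k hk hklog
  have hpow : (0:ℕ) < 2 ^ (k - 1) := Nat.pow_pos (by norm_num)
  set S : Set ℝ := {ε : ℝ | 0 < ε ∧ ∃ y : Fin (2 ^ (k - 1)) → PiLp q (fun _ : Fin ν => ℝ),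
      (⇑(lpId p q ν)) '' Metric.closedBall 0 1 ⊆ ⋃ i, Metric.closedBall (y i) ε} with hS
  have hEN : entropyNumber (lpId p q ν) k = sInf S := rfl
  -- 1 belongs to the defining set
  have mem1 : (1:ℝ) ∈ S := by
    refine ⟨one_pos, fun _ => 0, ?_⟩
    rintro z ⟨x, hx, rfl⟩
    refine mem_iUnion.2 ⟨⟨0, hpow⟩, ?_⟩
    rw [Metric.mem_closedBall, dist_zero_right]
    exact (lpId_norm_apply_le p q hpq x).trans (mem_closedBall_zero_iff.mp hx)
  have hbdd : BddBelow S := ⟨0, fun ε hε => hε.1.le⟩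
  rw [hEN]
  constructor
  · -- lower bound
    apply le_csInf ⟨1, mem1⟩
    rintro ε ⟨hε, y, hcov⟩
    -- 2^(k-1) < ν
    have h2k : (2:ℝ) ^ (k:ℝ) ≤ (ν:ℝ) :=
      (Real.le_logb_iff_rpow_le (by norm_num) (by exact_mod_cast Nat.lt_of_lt_of_le Nat.zero_lt_one hν)).mp hklog
    have h2k' : 2 ^ k ≤ ν := by
      have : ((2 ^ k : ℕ) : ℝ) ≤ (ν : ℝ) := by
        rw [Nat.cast_pow]
        simpa [Real.rpow_natCast] using h2k
      exact_mod_cast this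
    have hν2 : 2 ^ (k - 1) < ν :=
      lt_of_lt_of_le (Nat.pow_lt_pow_right one_lt_two (by omega)) h2k'
    -- the unit vectors
    set s : Fin ν → PiLp q (fun _ : Fin ν => ℝ) :=
      fun i => (WithLp.equiv q (Fin ν → ℝ)).symm (Pi.single i 1) with hs_def
    have hs : ∀ i, s i ∈ (⇑(lpId p q ν)) '' Metric.closedBall 0 1 := by
      intro i
      refine ⟨(WithLp.equiv p (Fin ν → ℝ)).symm (Pi.single i 1), ?_, rfl⟩
      rw [mem_closedBall_zero_iff, WithLp.equiv_symm_apply, PiLp.norm_toLp_single]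
      norm_num
    have hchoice : ∀ i, ∃ j, s i ∈ Metric.closedBall (y j) ε := fun i =>
      mem_iUnion.1 (hcov (hs i))
    choose f hf using hchoice
    obtain ⟨i, j, hij, hfe⟩ := Fintype.exists_ne_map_eq_of_card_lt f (by simpa using hν2)
    have hdist : (1:ℝ) ≤ dist (s i) (s j) := by
      have hco := piLp_coord_le q (s i - s j) i
      have hval : (s i - s j) i = 1 := by
        have : (s i - s j) i = s i i - s j i := rfl
        rw [this, hs_def]
        simp [WithLp.equiv_symm_apply, Pi.single_eq_same, Pi.single_eq_of_ne hij, hij]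
      rw [dist_eq_norm]
      calc (1:ℝ) = ‖(s i - s j) i‖ := by rw [hval]; norm_num
        _ ≤ ‖s i - s j‖ := hco
    have htri : dist (s i) (s j) ≤ 2 * ε := by
      calc dist (s i) (s j) ≤ dist (s i) (y (f i)) + dist (y (f i)) (s j) := dist_triangle _ _ _
        _ ≤ ε + ε := by
            refine add_le_add (Metric.mem_closedBall.mp (hf i)) ?_
            rw [dist_comm, hfe]
            exact Metric.mem_closedBall.mp (hf j)
        _ = 2 * ε := by ring
    linarith
  · exact csInf_le hbdd mem1
end

section
/- Let (T, ξ*) be a finite rooted tree with card V₁(ξ) ≤ k for every vertex ξ, and let Φ : 2^{V(T)} → ℝ₊ be superadditive on disjoint sets (Φ(V₁ ∪ V₂) ≥ Φ(V₁) + Φ(V₂) for disjoint V₁, V₂) with Φ(V(T)) > 0. Then there is C(k) > 0 such that for every n ∈ ℕ there exists a partition of T into at most C(k)·n subtrees T_j such that Φ(V(T_j)) ≤ (k+2)·Φ(V(T))/n for every j with card V(T_j) ≥ 2. -/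
open SimpleGraph Set

namespace TreePartAux

variable {V : Type} [DecidableEq V] {G : SimpleGraph V} {root : V}

/-- The unique path from `root` to `w` in a tree. -/
noncomputable def rpath (hT : G.IsTree) (root w : V) : G.Walk root w :=
  (hT.existsUnique_path root w).exists.choose

lemma rpath_isPath (hT : G.IsTree) (w : V) : (rpath hT root w).IsPath :=
  (hT.existsUnique_path root w).exists.choose_spec

lemma rpath_unique (hT : G.IsTree) {w : V} (q : G.Walk root w) (hq : q.IsPath) :
    q = rpath hT root w := by
  obtain ⟨p, hp, hun⟩ := hT.existsUnique_path root w
  rw [hun q hq, hun _ (rpath_isPath hT w)]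

lemma rpath_length (hT : G.IsTree) (w : V) :
    (rpath hT root w).length = G.dist root w := by
  refine le_antisymm ?_ (SimpleGraph.dist_le _)
  obtain ⟨q, hq⟩ := hT.isConnected.exists_walk_length_eq_dist root w
  calc (rpath hT root w).length = q.bypass.length := by
        rw [rpath_unique hT q.bypass q.bypass_isPath]
    _ ≤ q.length := q.length_bypass_le
    _ = G.dist root w := hq

lemma takeUntil_rpath (hT : G.IsTree) {w u : V} (h : u ∈ (rpath hT root w).support) :
    (rpath hT root w).takeUntil u h = rpath hT root u :=
  rpath_unique hT _ ((rpath_isPath hT w).takeUntil h)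

lemma dist_le_of_mem_rpath (hT : G.IsTree) {w u : V} (h : u ∈ (rpath hT root w).support) :
    G.dist root u ≤ G.dist root w := by
  have h1 : ((rpath hT root w).takeUntil u h).length ≤ (rpath hT root w).length :=
    SimpleGraph.Walk.length_takeUntil_le _ h
  rw [takeUntil_rpath hT h, rpath_length, rpath_length] at h1
  exact h1

/-- children of a vertex -/
def children (G : SimpleGraph V) (root v : V) : Set V :=
  {c : V | G.Adj v c ∧ G.dist root c = G.dist root v + 1}

/-- descendants of `v` (including `v`): vertices whose root-path passes through `v`. -/
def desc (hT : G.IsTree) (root v : V) : Set V :=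
  {w : V | v ∈ (rpath hT root w).support}

lemma mem_desc_self (hT : G.IsTree) (v : V) : v ∈ desc hT root v :=
  SimpleGraph.Walk.end_mem_support _

lemma desc_root (hT : G.IsTree) : desc hT root root = Set.univ :=
  Set.eq_univ_of_forall fun _ => SimpleGraph.Walk.start_mem_support _

lemma dist_le_of_mem_desc (hT : G.IsTree) {v w : V} (h : w ∈ desc hT root v) :
    G.dist root v ≤ G.dist root w :=
  dist_le_of_mem_rpath hT h

lemma rpath_child (hT : G.IsTree) {v c : V} (hc : c ∈ children G root v) :
    rpath hT root c = (rpath hT root v).concat hc.1 := by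
  refine (rpath_unique hT _ ?_).symm
  rw [SimpleGraph.Walk.concat_eq_append, SimpleGraph.Walk.isPath_def,
    SimpleGraph.Walk.support_append]
  simp only [SimpleGraph.Walk.support_cons, SimpleGraph.Walk.support_nil, List.tail_cons]
  rw [List.nodup_append]
  refine ⟨(rpath_isPath hT v).support_nodup, List.nodup_singleton _, ?_⟩
  intro x hx _ hx' hxy; subst hxy
  rw [List.mem_singleton] at hx'
  subst hx'
  have h1 := dist_le_of_mem_rpath hT hx
  rw [hc.2] at h1
  omega

lemma not_mem_desc_child (hT : G.IsTree) {v c : V} (hc : c ∈ children G root v) :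
    v ∉ desc hT root c := by
  intro h
  have := dist_le_of_mem_desc hT h
  rw [hc.2] at this
  omega

lemma desc_child_subset (hT : G.IsTree) {v c : V} (hc : c ∈ children G root v) :
    desc hT root c ⊆ desc hT root v := by
  intro w hw
  have h1 : v ∈ (rpath hT root c).support := by
    rw [rpath_child hT hc, SimpleGraph.Walk.support_concat]
    simp [List.concat_eq_append, SimpleGraph.Walk.end_mem_support]
  have h2 := SimpleGraph.Walk.support_takeUntil_subset _ hw
  rw [takeUntil_rpath hT hw] at h2
  exact h2 h1

lemma exists_child_of_mem_desc (hT : G.IsTree) {v w : V} (hw : w ∈ desc hT root v)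
    (hne : w ≠ v) : ∃ c ∈ children G root v, w ∈ desc hT root c := by
  have hv : v ∈ (rpath hT root w).support := hw
  have hdrop : ((rpath hT root w).dropUntil v hv).IsPath := (rpath_isPath hT w).dropUntil hv
  have hspec := (rpath hT root w).take_spec hv
  obtain ⟨c, hadj, q, hq⟩ := SimpleGraph.Walk.exists_eq_cons_of_ne hne.symm
    ((rpath hT root w).dropUntil v hv)
  ·     -- c is adjacent to v; show c is a child and w ∈ desc c
    have hcsup : c ∈ (rpath hT root w).support := by
      apply SimpleGraph.Walk.support_dropUntil_subset _ hv
      rw [hq]; simp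
    have hcnotin : c ∉ (rpath hT root v).support := by
      intro hcv
      -- c would appear twice in the support of rpath w
      have hnodup := (rpath_isPath (root := root) hT w).support_nodup
      rw [← hspec, SimpleGraph.Walk.support_append, takeUntil_rpath hT hv] at hnodup
      rw [List.nodup_append] at hnodup
      refine hnodup.2.2 c hcv c ?_ rfl
      rw [hq]
      simp only [SimpleGraph.Walk.support_cons, List.tail_cons]
      exact SimpleGraph.Walk.start_mem_support q
    have hchild : c ∈ children G root v := by
      refine ⟨hadj, ?_⟩
      have : ((rpath hT root v).concat hadj).IsPath := by
        rw [SimpleGraph.Walk.concat_eq_append, SimpleGraph.Walk.isPath_def,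
          SimpleGraph.Walk.support_append]
        simp only [SimpleGraph.Walk.support_cons, SimpleGraph.Walk.support_nil, List.tail_cons]
        rw [List.nodup_append]
        exact ⟨(rpath_isPath hT v).support_nodup, List.nodup_singleton _,
          by intro x hx _ hx' hxy; subst hxy; simp at hx'; subst hx'; exact hcnotin hx⟩
      have heq := rpath_unique hT _ this
      have := rpath_length (root := root) hT c
      rw [← heq, SimpleGraph.Walk.length_concat, rpath_length] at this
      omega
    refine ⟨c, hchild, ?_⟩
    show c ∈ (rpath hT root w).support
    exact hcsup

lemma getVert_takeUntil_length (hT : G.IsTree) {w u : V}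
    (h : u ∈ (rpath hT root w).support) :
    (rpath hT root w).getVert (G.dist root u) = u := by
  have hspec := (rpath hT root w).take_spec h
  conv_lhs => rw [← hspec]
  rw [SimpleGraph.Walk.getVert_append]
  have hlen : ((rpath hT root w).takeUntil u h).length = G.dist root u := by
    rw [takeUntil_rpath hT h, rpath_length]
  rw [hlen, if_neg (lt_irrefl _)]
  simp [SimpleGraph.Walk.getVert_zero]

lemma desc_child_disjoint (hT : G.IsTree) {v c c' : V} (hc : c ∈ children G root v)
    (hc' : c' ∈ children G root v) (hne : c ≠ c') :
    Disjoint (desc hT root c) (desc hT root c') := by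
  rw [Set.disjoint_left]
  intro w hwc hwc'
  apply hne
  have h1 := getVert_takeUntil_length hT (hwc : c ∈ (rpath hT root w).support)
  have h2 := getVert_takeUntil_length hT (hwc' : c' ∈ (rpath hT root w).support)
  rw [hc.2] at h1
  rw [hc'.2] at h2
  rw [← h1, ← h2]


lemma desc_eq (hT : G.IsTree) (v : V) :
    desc hT root v = {v} ∪ ⋃ c ∈ children G root v, desc hT root c := by
  ext w
  simp only [Set.mem_union, Set.mem_singleton_iff, Set.mem_iUnion, exists_prop]
  constructor
  · intro hw
    by_cases hne : w = v
    · exact Or.inl hne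
    · exact Or.inr (exists_child_of_mem_desc hT hw hne)
  · rintro (rfl | ⟨c, hc, hw⟩)
    · exact mem_desc_self hT _
    · exact desc_child_subset hT hc hw

omit [DecidableEq V] in
lemma conn_singleton (G : SimpleGraph V) (v : V) : (G.induce {v}).Connected := by
  have hne : Nonempty ({v} : Set V) := ⟨⟨v, rfl⟩⟩
  rw [SimpleGraph.connected_iff_exists_forall_reachable]
  refine ⟨⟨v, rfl⟩, fun b => ?_⟩
  have : (⟨v, rfl⟩ : ({v} : Set V)) = b := Subtype.ext (by
    have hb := b.2
    simp only [Set.mem_singleton_iff] at hb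
    rw [hb])
  rw [this]

omit [DecidableEq V] in
lemma conn_insert {G : SimpleGraph V} {S : Set V} {v a : V}
    (hS : (G.induce S).Connected) (ha : a ∈ S) (hadj : G.Adj v a) :
    (G.induce (insert v S)).Connected := by
  have h1 : insert v S = {v, a} ∪ S := by
    ext x
    simp only [Set.mem_insert_iff, Set.mem_union, Set.mem_singleton_iff]
    constructor
    · rintro (rfl | h) <;> tauto
    · rintro ((rfl | rfl) | h) <;> tauto
  rw [h1]
  exact SimpleGraph.induce_union_connected (SimpleGraph.induce_pair_connected_of_adj hadj).preconnected hS.preconnected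
    ⟨a, by simp, ha⟩

omit [DecidableEq V] in
lemma conn_insert_iUnion {G : SimpleGraph V} (v : V) (ι : Finset V) (o : V → Set V)
    (h : ∀ c ∈ ι, o c = ∅ ∨ (c ∈ o c ∧ (G.induce (o c)).Connected ∧ G.Adj v c)) :
    (G.induce (insert v (⋃ c ∈ ι, o c))).Connected := by
  classical
  induction ι using Finset.induction with
  | empty =>
    have he : insert v (⋃ c ∈ (∅ : Finset V), o c) = {v} := by simp
    rw [he]
    exact conn_singleton G v
  | @insert a s ha ih =>
    have hunion : (⋃ c ∈ insert a s, o c) = o a ∪ ⋃ c ∈ s, o c := by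
      simp [Set.biUnion_insert]
    rw [hunion]
    rcases h a (Finset.mem_insert_self a s) with h0 | ⟨hmem, hconn, hadj⟩
    · rw [h0, Set.empty_union]
      exact ih (fun c hc => h c (Finset.mem_insert_of_mem hc))
    · have h2 : insert v (o a ∪ ⋃ c ∈ s, o c)
          = (insert v (o a)) ∪ (insert v (⋃ c ∈ s, o c)) := by
        ext x; simp only [Set.mem_insert_iff, Set.mem_union]; tauto
      rw [h2]
      refine SimpleGraph.induce_union_connected ?_ ?_ ⟨v, by simp, by simp⟩
      · exact (conn_insert hconn hmem hadj).preconnected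
      · exact (ih (fun c hc => h c (Finset.mem_insert_of_mem hc))).preconnected

omit [DecidableEq V] in
lemma phi_empty {Φ : Set V → ℝ} (h0 : ∀ A : Set V, 0 ≤ Φ A)
    (hsup : ∀ A B : Set V, Disjoint A B → Φ A + Φ B ≤ Φ (A ∪ B)) : Φ ∅ = 0 := by
  have h := hsup ∅ ∅ (by simp)
  simp only [Set.union_empty] at h
  linarith [h0 (∅ : Set V)]

omit [DecidableEq V] in
lemma phi_mono {Φ : Set V → ℝ} (h0 : ∀ A : Set V, 0 ≤ Φ A)
    (hsup : ∀ A B : Set V, Disjoint A B → Φ A + Φ B ≤ Φ (A ∪ B))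
    {A B : Set V} (h : A ⊆ B) : Φ A ≤ Φ B := by
  have h1 := hsup A (B \ A) disjoint_sdiff_right
  rw [Set.union_diff_cancel h] at h1
  linarith [h0 (B \ A)]

omit [DecidableEq V] in
lemma phi_sum {Φ : Set V → ℝ} (h0 : ∀ A : Set V, 0 ≤ Φ A)
    (hsup : ∀ A B : Set V, Disjoint A B → Φ A + Φ B ≤ Φ (A ∪ B))
    (E : Finset (Set V)) (hdisj : ∀ e ∈ E, ∀ e' ∈ E, e ≠ e' → Disjoint e e') :
    ∑ e ∈ E, Φ e ≤ Φ (⋃₀ ↑E) := by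
  classical
  induction E using Finset.induction with
  | empty => simp [phi_empty h0 hsup]
  | @insert e s he ih =>
    rw [Finset.sum_insert he]
    have hd : Disjoint e (⋃₀ ↑s) := by
      rw [Set.disjoint_sUnion_right]
      intro t ht
      exact hdisj e (Finset.mem_insert_self _ _) t (Finset.mem_insert_of_mem ht)
        (fun hh => he (hh ▸ ht))
    calc Φ e + ∑ x ∈ s, Φ x ≤ Φ e + Φ (⋃₀ ↑s) := by
          have := ih (fun a ha b hb hab =>
            hdisj a (Finset.mem_insert_of_mem ha) b (Finset.mem_insert_of_mem hb) hab)
          linarith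
      _ ≤ Φ (e ∪ ⋃₀ ↑s) := hsup _ _ hd
      _ = Φ (⋃₀ ↑(insert e s)) := by
          congr 1
          simp [Set.sUnion_insert]

lemma measure_child_lt [Finite V] {v c : V} (hc : c ∈ children G root v) :
    {w : V | G.dist root c < G.dist root w}.ncard
      < {w : V | G.dist root v < G.dist root w}.ncard := by
  apply Set.ncard_lt_ncard _ (Set.toFinite _)
  constructor
  · intro w hw
    simp only [Set.mem_setOf_eq] at hw ⊢
    have := hc.2
    omega
  · intro hsub
    have h1 : c ∈ {w : V | G.dist root v < G.dist root w} := by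
      simp only [Set.mem_setOf_eq, hc.2]; omega
    have h2 := hsub h1
    simp only [Set.mem_setOf_eq] at h2
    omega


/-- The invariant carried through the bottom-up induction. -/
def Good (hT : G.IsTree) (Φ : Set V → ℝ) (t : ℝ) (k : ℕ) (v : V)
    (x : Finset (Set V) × Set V × Finset (Set V)) : Prop :=
  (∀ S ∈ x.1, S.Nonempty ∧ (G.induce S).Connected ∧ S ⊆ desc hT root v ∧
      (2 ≤ S.ncard → Φ S ≤ t)) ∧
  (∀ S ∈ x.1, ∀ S' ∈ x.1, S ≠ S' → Disjoint S S') ∧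
  x.2.1 ⊆ desc hT root v ∧
  (∀ S ∈ x.1, Disjoint x.2.1 S) ∧
  (x.2.1 = ∅ ∨ (v ∈ x.2.1 ∧ (G.induce x.2.1).Connected ∧ Φ x.2.1 ≤ t)) ∧
  ((⋃₀ ↑x.1) ∪ x.2.1 = desc hT root v) ∧
  (∀ e ∈ x.2.2, e ⊆ desc hT root v ∧ Disjoint e x.2.1 ∧ t ≤ Φ e ∧ e.Nonempty) ∧
  (∀ e ∈ x.2.2, ∀ e' ∈ x.2.2, e ≠ e' → Disjoint e e') ∧
  x.1.card ≤ (k+1) * x.2.2.card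

lemma main_induction [Finite V] (hT : G.IsTree) (k : ℕ)
    (hk : ∀ ξ : V, (children G root ξ).ncard ≤ k)
    (Φ : Set V → ℝ) (h0 : ∀ A : Set V, 0 ≤ Φ A)
    (hsup : ∀ A B : Set V, Disjoint A B → Φ A + Φ B ≤ Φ (A ∪ B)) (t : ℝ) (ht : 0 < t) :
    ∀ N : ℕ, ∀ v : V, {w : V | G.dist root v < G.dist root w}.ncard < N →
    ∃ x, Good (root := root) hT Φ t k v x := by
  classical
  intro N
  induction N with
  | zero => intro v h; omega
  | succ N ih =>
    intro v hv
    set C : Finset V := (Set.toFinite (children G root v)).toFinset with hCdef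
    have hmemC : ∀ c, c ∈ C ↔ c ∈ children G root v := fun c => Set.Finite.mem_toFinset _
    -- apply the induction hypothesis to each child
    have hex : ∀ c : V, ∃ x : Finset (Set V) × Set V × Finset (Set V),
        c ∈ children G root v → Good (root := root) hT Φ t k c x := by
      intro c
      by_cases hc : c ∈ children G root v
      · obtain ⟨x, hx⟩ := ih c (by
          have := measure_child_lt (root := root) hc
          omega)
        exact ⟨x, fun _ => hx⟩
      · exact ⟨(∅, ∅, ∅), fun h => absurd h hc⟩
    choose f hf using hex
    -- abbreviations for the child data fields
    have hfc : ∀ c ∈ C, Good (root := root) hT Φ t k c (f c) := fun c hc => hf c ((hmemC c).1 hc)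
    have hchC : ∀ c ∈ C, c ∈ children G root v := fun c hc => (hmemC c).1 hc
    have hvnot : ∀ c ∈ C, v ∉ desc hT root c := fun c hc =>
      not_mem_desc_child hT (hchC c hc)
    have hdsub : ∀ c ∈ C, desc hT root c ⊆ desc hT root v := fun c hc =>
      desc_child_subset hT (hchC c hc)
    have hScsub : ∀ c ∈ C, ∀ S ∈ (f c).1, S ⊆ desc hT root c := fun c hc S hS =>
      ((hfc c hc).1 S hS).2.2.1
    have hosub : ∀ c ∈ C, (f c).2.1 ⊆ desc hT root c := fun c hc => (hfc c hc).2.2.1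
    have hEsub : ∀ c ∈ C, ∀ e ∈ (f c).2.2, e ⊆ desc hT root c := fun c hc e he =>
      ((hfc c hc).2.2.2.2.2.2.1 e he).1
    have hdisjCC : ∀ c ∈ C, ∀ c' ∈ C, c ≠ c' →
        ∀ X : Set V, X ⊆ desc hT root c → ∀ Y : Set V, Y ⊆ desc hT root c' →
        Disjoint X Y := fun c hc c' hc' hne X hX Y hY =>
      Set.disjoint_of_subset hX hY (desc_child_disjoint hT (hchC c hc) (hchC c' hc') hne)
    have hdesc_v : desc hT root v = {v} ∪ ⋃ c ∈ C, desc hT root c := by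
      rw [desc_eq hT v]
      congr 1
      ext x
      simp only [Set.mem_iUnion, exists_prop, hmemC]
    set cand : Set V := insert v (⋃ c ∈ C, (f c).2.1) with hcanddef
    have hvcand : v ∈ cand := Set.mem_insert _ _
    have hcand_sub : cand ⊆ desc hT root v := by
      rw [hdesc_v]
      intro x hx
      rcases Set.mem_insert_iff.1 hx with rfl | hx
      · exact Or.inl rfl
      · simp only [Set.mem_iUnion, exists_prop] at hx
        obtain ⟨c, hc, hxc⟩ := hx
        exact Or.inr (by simp only [Set.mem_iUnion, exists_prop]; exact ⟨c, hc, hosub c hc hxc⟩)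
    have hcand_conn : (G.induce cand).Connected := by
      apply conn_insert_iUnion v C (fun c => (f c).2.1)
      intro c hc
      rcases (hfc c hc).2.2.2.2.1 with h | ⟨hm, hco, _⟩
      · exact Or.inl h
      · exact Or.inr ⟨hm, hco, (hchC c hc).1⟩
    -- anything inside `desc c` that avoids the open set of `c` avoids `cand`
    have hcand_inter : ∀ c ∈ C, ∀ X : Set V, X ⊆ desc hT root c →
        Disjoint X (f c).2.1 → Disjoint X cand := by
      intro c hc X hX hXo
      rw [Set.disjoint_right]
      intro a ha hax
      rcases Set.mem_insert_iff.1 ha with rfl | ha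
      · exact hvnot c hc (hX hax)
      · simp only [Set.mem_iUnion, exists_prop] at ha
        obtain ⟨c', hc', hac'⟩ := ha
        by_cases hcc : c' = c
        · subst hcc
          exact Set.disjoint_left.1 hXo hax hac'
        · exact Set.disjoint_left.1
            (hdisjCC c hc c' hc' (fun h => hcc h.symm) X hX _ (hosub c' hc')) hax hac'
    have hcovC : ∀ c ∈ C, (⋃₀ ↑((f c).1)) ∪ (f c).2.1 = desc hT root c := fun c hc =>
      (hfc c hc).2.2.2.2.2.1
    have hEdisjF : ∀ c ∈ C, ∀ c' ∈ C, c ≠ c' → Disjoint ((f c).2.2) ((f c').2.2) := by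
      intro c hc c' hc' hne
      rw [Finset.disjoint_left]
      intro e he he'
      have h1 := hdisjCC c hc c' hc' hne e (hEsub c hc e he) e (hEsub c' hc' e he')
      have h2 := ((hfc c hc).2.2.2.2.2.2.1 e he).2.2.2
      rw [disjoint_self] at h1
      rw [h1] at h2
      simp only [Set.bot_eq_empty] at h2
      exact Set.not_nonempty_empty h2
    have hsum_card : (C.biUnion (fun c => (f c).2.2)).card
        = ∑ c ∈ C, ((f c).2.2).card := Finset.card_biUnion hEdisjF
    have hpa_card : (C.biUnion (fun c => (f c).1)).card
        ≤ (k+1) * (C.biUnion (fun c => (f c).2.2)).card := by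
      calc (C.biUnion (fun c => (f c).1)).card ≤ ∑ c ∈ C, ((f c).1).card :=
            Finset.card_biUnion_le
        _ ≤ ∑ c ∈ C, (k+1) * ((f c).2.2).card :=
            Finset.sum_le_sum (fun c hc => (hfc c hc).2.2.2.2.2.2.2.2)
        _ = (k+1) * ∑ c ∈ C, ((f c).2.2).card := by rw [Finset.mul_sum]
        _ = (k+1) * (C.biUnion (fun c => (f c).2.2)).card := by rw [hsum_card]
    by_cases hle : Φ cand ≤ t
    · -- no event: keep `cand` open
      refine ⟨(C.biUnion (fun c => (f c).1), cand, C.biUnion (fun c => (f c).2.2)),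
        ?_, ?_, hcand_sub, ?_, ?_, ?_, ?_, ?_, hpa_card⟩
      · intro S hS
        obtain ⟨c, hc, hSc⟩ := Finset.mem_biUnion.1 hS
        obtain ⟨hne, hconn, hsub, hbd⟩ := (hfc c hc).1 S hSc
        exact ⟨hne, hconn, hsub.trans (hdsub c hc), hbd⟩
      · intro S hS S' hS' hne
        obtain ⟨c, hc, hSc⟩ := Finset.mem_biUnion.1 hS
        obtain ⟨c', hc', hSc'⟩ := Finset.mem_biUnion.1 hS'
        by_cases hcc : c = c'
        · subst hcc
          exact (hfc c hc).2.1 S hSc S' hSc' hne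
        · exact hdisjCC c hc c' hc' hcc S (hScsub c hc S hSc) S' (hScsub c' hc' S' hSc')
      · intro S hS
        obtain ⟨c, hc, hSc⟩ := Finset.mem_biUnion.1 hS
        exact (hcand_inter c hc S (hScsub c hc S hSc)
          ((hfc c hc).2.2.2.1 S hSc).symm).symm
      · exact Or.inr ⟨hvcand, hcand_conn, hle⟩
      · -- covering
        rw [hdesc_v]
        ext x
        simp only [Set.mem_union, Set.mem_sUnion, Finset.mem_coe, Finset.mem_biUnion,
          Set.mem_insert_iff, Set.mem_iUnion, exists_prop, Set.mem_singleton_iff, hcanddef]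
        constructor
        · rintro (⟨S, ⟨c, hc, hSc⟩, hxS⟩ | (rfl | ⟨c, hc, hxc⟩))
          · refine Or.inr ⟨c, hc, ?_⟩
            rw [← hcovC c hc]
            exact Or.inl ⟨S, hSc, hxS⟩
          · exact Or.inl rfl
          · refine Or.inr ⟨c, hc, ?_⟩
            rw [← hcovC c hc]
            exact Or.inr hxc
        · rintro (rfl | ⟨c, hc, hxc⟩)
          · exact Or.inr (Or.inl rfl)
          · rw [← hcovC c hc] at hxc
            rcases hxc with ⟨S, hSc, hxS⟩ | hxo
            · exact Or.inl ⟨S, ⟨c, hc, hSc⟩, hxS⟩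
            · exact Or.inr (Or.inr ⟨c, hc, hxo⟩)
      · intro e he
        obtain ⟨c, hc, hec⟩ := Finset.mem_biUnion.1 he
        obtain ⟨hsub, hdisj, hge, hne⟩ := (hfc c hc).2.2.2.2.2.2.1 e hec
        exact ⟨hsub.trans (hdsub c hc), hcand_inter c hc e (hEsub c hc e hec) hdisj,
          hge, hne⟩
      · intro e he e' he' hne
        obtain ⟨c, hc, hec⟩ := Finset.mem_biUnion.1 he
        obtain ⟨c', hc', hec'⟩ := Finset.mem_biUnion.1 he'
        by_cases hcc : c = c'
        · subst hcc
          exact (hfc c hc).2.2.2.2.2.2.2.1 e hec e' hec' hne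
        · exact hdisjCC c hc c' hc' hcc e (hEsub c hc e hec) e' (hEsub c' hc' e' hec')
    · -- event at v: close everything
      set opnParts : Finset (Set V) :=
        (C.filter (fun c => ((f c).2.1).Nonempty)).image (fun c => (f c).2.1) with hOPdef
      set parts : Finset (Set V) := insert {v} (C.biUnion (fun c => (f c).1) ∪ opnParts)
        with hPdef
      have hmemP : ∀ S, S ∈ parts ↔ S = {v} ∨ (∃ c ∈ C, S ∈ (f c).1) ∨
          (∃ c ∈ C, ((f c).2.1).Nonempty ∧ S = (f c).2.1) := by
        intro S
        simp only [hPdef, hOPdef, Finset.mem_insert, Finset.mem_union, Finset.mem_biUnion,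
          Finset.mem_image, Finset.mem_filter]
        constructor
        · rintro (h | (h | ⟨c, ⟨hc, hne⟩, hS⟩))
          · exact Or.inl h
          · exact Or.inr (Or.inl h)
          · exact Or.inr (Or.inr ⟨c, hc, hne, hS.symm⟩)
        · rintro (h | (h | ⟨c, hc, hne, hS⟩))
          · exact Or.inl h
          · exact Or.inr (Or.inl h)
          · exact Or.inr (Or.inr ⟨c, ⟨hc, hne⟩, hS.symm⟩)
      refine ⟨(parts, ∅, insert cand (C.biUnion (fun c => (f c).2.2))),
        ?_, ?_, Set.empty_subset _, ?_, Or.inl rfl, ?_, ?_, ?_, ?_⟩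
      · intro S hS
        rcases (hmemP S).1 hS with rfl | (⟨c, hc, hSc⟩ | ⟨c, hc, hne, rfl⟩)
        · refine ⟨⟨v, rfl⟩, conn_singleton G v, ?_, ?_⟩
          · exact Set.singleton_subset_iff.2 (mem_desc_self hT v)
          · intro h2
            rw [Set.ncard_singleton] at h2
            omega
        · obtain ⟨hne, hconn, hsub, hbd⟩ := (hfc c hc).1 S hSc
          exact ⟨hne, hconn, hsub.trans (hdsub c hc), hbd⟩
        · rcases (hfc c hc).2.2.2.2.1 with h | ⟨hm, hconn, hphi⟩
          · exact absurd hne (by rw [h]; exact Set.not_nonempty_empty)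
          · exact ⟨hne, hconn, (hosub c hc).trans (hdsub c hc), fun _ => hphi⟩
      · intro S hS S' hS' hSne
        have hsingdisj : ∀ T : Set V, (∀ c ∈ C, T ⊆ desc hT root c → Disjoint ({v} : Set V) T) := by
          intro T c hc hT'
          rw [Set.disjoint_left]
          rintro x rfl hxT
          exact hvnot c hc (hT' hxT)
        rcases (hmemP S).1 hS with rfl | (⟨c, hc, hSc⟩ | ⟨c, hc, hone, rfl⟩) <;>
          rcases (hmemP S').1 hS' with rfl | (⟨c', hc', hSc'⟩ | ⟨c', hc', hone', hS'eq⟩)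
        · exact absurd rfl hSne
        · exact hsingdisj S' c' hc' (hScsub c' hc' S' hSc')
        · exact hS'eq ▸ hsingdisj _ c' hc' (hosub c' hc')
        · exact (hsingdisj S c hc (hScsub c hc S hSc)).symm
        · by_cases hcc : c = c'
          · subst hcc
            exact (hfc c hc).2.1 S hSc S' hSc' hSne
          · exact hdisjCC c hc c' hc' hcc S (hScsub c hc S hSc) S' (hScsub c' hc' S' hSc')
        · subst hS'eq
          by_cases hcc : c = c'
          · subst hcc
            exact ((hfc c hc).2.2.2.1 S hSc).symm
          · exact hdisjCC c hc c' hc' hcc S (hScsub c hc S hSc) _ (hosub c' hc')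
        · exact (hsingdisj _ c hc (hosub c hc)).symm
        · by_cases hcc : c = c'
          · subst hcc
            exact (hfc c hc).2.2.2.1 S' hSc'
          · exact hdisjCC c hc c' hc' hcc _ (hosub c hc) S' (hScsub c' hc' S' hSc')
        · subst hS'eq
          by_cases hcc : c = c'
          · subst hcc
            exact absurd rfl hSne
          · exact hdisjCC c hc c' hc' hcc _ (hosub c hc) _ (hosub c' hc')
      · intro S hS
        exact Set.empty_disjoint S
      · -- covering
        rw [Set.union_empty, hdesc_v]
        ext x
        simp only [Set.mem_sUnion, Finset.mem_coe, Set.mem_union, Set.mem_iUnion,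
          exists_prop, Set.mem_singleton_iff]
        constructor
        · rintro ⟨S, hS, hxS⟩
          rcases (hmemP S).1 hS with rfl | (⟨c, hc, hSc⟩ | ⟨c, hc, hone, rfl⟩)
          · exact Or.inl hxS
          · refine Or.inr ⟨c, hc, ?_⟩
            rw [← hcovC c hc]
            exact Or.inl ⟨S, hSc, hxS⟩
          · refine Or.inr ⟨c, hc, ?_⟩
            rw [← hcovC c hc]
            exact Or.inr hxS
        · rintro (hxv | ⟨c, hc, hxc⟩)
          · exact ⟨{v}, (hmemP _).2 (Or.inl rfl), by simp [hxv]⟩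
          · rw [← hcovC c hc] at hxc
            rcases hxc with ⟨S, hSc, hxS⟩ | hxo
            · exact ⟨S, (hmemP S).2 (Or.inr (Or.inl ⟨c, hc, hSc⟩)), hxS⟩
            · exact ⟨(f c).2.1, (hmemP _).2 (Or.inr (Or.inr ⟨c, hc, ⟨x, hxo⟩, rfl⟩)), hxo⟩
      · intro e he
        rcases Finset.mem_insert.1 he with rfl | he
        · exact ⟨hcand_sub, Set.disjoint_empty _, le_of_lt (lt_of_not_ge hle), ⟨v, hvcand⟩⟩
        · obtain ⟨c, hc, hec⟩ := Finset.mem_biUnion.1 he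
          obtain ⟨hsub, _, hge, hne⟩ := (hfc c hc).2.2.2.2.2.2.1 e hec
          exact ⟨hsub.trans (hdsub c hc), Set.disjoint_empty _, hge, hne⟩
      · intro e he e' he' hne
        have key : ∀ e' ∈ C.biUnion (fun c => (f c).2.2), Disjoint cand e' := by
          intro a ha
          obtain ⟨c, hc, hac⟩ := Finset.mem_biUnion.1 ha
          exact (hcand_inter c hc a (hEsub c hc a hac)
            ((hfc c hc).2.2.2.2.2.2.1 a hac).2.1).symm
        rcases Finset.mem_insert.1 he with rfl | he <;>
          rcases Finset.mem_insert.1 he' with rfl | he'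
        · exact absurd rfl hne
        · exact key e' he'
        · exact (key e he).symm
        · obtain ⟨c, hc, hec⟩ := Finset.mem_biUnion.1 he
          obtain ⟨c', hc', hec'⟩ := Finset.mem_biUnion.1 he'
          by_cases hcc : c = c'
          · subst hcc
            exact (hfc c hc).2.2.2.2.2.2.2.1 e hec e' hec' hne
          · exact hdisjCC c hc c' hc' hcc e (hEsub c hc e hec) e' (hEsub c' hc' e' hec')
      · -- cardinality bound
        have hcandnot : cand ∉ C.biUnion (fun c => (f c).2.2) := by
          intro h
          obtain ⟨c, hc, hcc⟩ := Finset.mem_biUnion.1 h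
          exact hvnot c hc (hEsub c hc cand hcc hvcand)
        have hEcard : (insert cand (C.biUnion (fun c => (f c).2.2))).card
            = (C.biUnion (fun c => (f c).2.2)).card + 1 :=
          Finset.card_insert_of_notMem hcandnot
        have hCk : C.card ≤ k := by
          have h1 : (children G root v).ncard = C.card :=
            Set.ncard_eq_toFinset_card _ (Set.toFinite _)
          have h2 := hk v
          omega
        have hOP : opnParts.card ≤ k := by
          calc opnParts.card ≤ (C.filter (fun c => ((f c).2.1).Nonempty)).card :=
                Finset.card_image_le
            _ ≤ C.card := Finset.card_filter_le _ _
            _ ≤ k := hCk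
        calc parts.card ≤ ((C.biUnion (fun c => (f c).1)) ∪ opnParts).card + 1 := by
              rw [hPdef]
              exact Finset.card_insert_le _ _
          _ ≤ ((C.biUnion (fun c => (f c).1)).card + opnParts.card) + 1 := by
              have := Finset.card_union_le (C.biUnion (fun c => (f c).1)) opnParts
              omega
          _ ≤ ((k+1) * (C.biUnion (fun c => (f c).2.2)).card + k) + 1 := by
              have := hpa_card
              omega
          _ = (k+1) * ((C.biUnion (fun c => (f c).2.2)).card + 1) := by ring
          _ = (k+1) * (insert cand (C.biUnion (fun c => (f c).2.2))).card := by
              rw [hEcard]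


end TreePartAux

/-- Partition lemma for trees: if every vertex of a finite rooted tree has at most `k`
children and `Φ` is superadditive on disjoint vertex sets with `Φ(V) > 0`, then there is
`C(k) > 0` such that for every `n` the tree can be partitioned into at most `C(k)·n`
subtrees `T_j` with `Φ(V(T_j)) ≤ (k+2)Φ(V)/n` whenever `T_j` has at least two vertices. -/
theorem tree_partition_lemma (k : ℕ) :
    ∃ C : ℝ, 0 < C ∧
      ∀ (V : Type) (_ : Fintype V) (G : SimpleGraph V) (root : V),
        G.IsTree →
        (∀ ξ : V, Set.ncard {c : V | G.Adj ξ c ∧ G.dist root c = G.dist root ξ + 1} ≤ k) →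
        ∀ Φ : Set V → ℝ,
          (∀ A : Set V, 0 ≤ Φ A) →
          (∀ A B : Set V, Disjoint A B → Φ A + Φ B ≤ Φ (A ∪ B)) →
          0 < Φ Set.univ →
          ∀ n : ℕ, 1 ≤ n →
            ∃ P : Finset (Set V),
              (∀ S ∈ P, S.Nonempty ∧ (G.induce S).Connected) ∧
              (∀ S ∈ P, ∀ S' ∈ P, S ≠ S' → Disjoint S S') ∧
              (∀ v : V, ∃ S ∈ P, v ∈ S) ∧
              (P.card : ℝ) ≤ C * n ∧
              (∀ S ∈ P, 2 ≤ S.ncard → Φ S ≤ (k + 2) * Φ Set.univ / n) := by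
  refine ⟨(k : ℝ) + 2, by positivity, ?_⟩
  intro V hfV G root hT hk Φ h0 hsup hpos n hn
  letI : DecidableEq V := Classical.decEq V
  letI : DecidableEq (Set V) := Classical.decEq _
  have hnR : (1 : ℝ) ≤ (n : ℝ) := by exact_mod_cast hn
  have hnpos : (0 : ℝ) < (n : ℝ) := by linarith
  set t : ℝ := Φ Set.univ / n with htdef
  have htpos : 0 < t := div_pos hpos hnpos
  have hk' : ∀ ξ : V, (TreePartAux.children G root ξ).ncard ≤ k := hk
  obtain ⟨⟨parts, opn, E⟩, hG⟩ := TreePartAux.main_induction (root := root) hT k hk'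
    Φ h0 hsup t htpos
    ({w : V | G.dist root root < G.dist root w}.ncard + 1) root (Nat.lt_succ_self _)
  obtain ⟨hprops, hpair, hopnsub, hopndisj, hopninv, hcover, hEprops, hEpair, hcard⟩ := hG
  dsimp only at hprops hpair hopnsub hopndisj hopninv hcover hEprops hEpair hcard
  rw [TreePartAux.desc_root] at hcover
  -- bound the number of heavy witnesses
  have hEn : E.card ≤ n := by
    have h1 : ∑ e ∈ E, Φ e ≤ Φ Set.univ :=
      le_trans (TreePartAux.phi_sum h0 hsup E hEpair)
        (TreePartAux.phi_mono h0 hsup (Set.subset_univ _))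
    have h2 : (E.card : ℝ) * t ≤ ∑ e ∈ E, Φ e := by
      have h3 := Finset.card_nsmul_le_sum E Φ t (fun e he => (hEprops e he).2.2.1)
      simpa [nsmul_eq_mul] using h3
    have hnt : Φ Set.univ = n * t := by
      rw [htdef]
      field_simp
    have h4 : (E.card : ℝ) * t ≤ (n : ℝ) * t := by
      rw [← hnt]; exact le_trans h2 h1
    have h5 : (E.card : ℝ) ≤ (n : ℝ) := le_of_mul_le_mul_right h4 htpos
    exact_mod_cast h5
  have htle : t ≤ (↑k + 2) * Φ Set.univ / n := by
    rw [mul_div_assoc, ← htdef]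
    nlinarith [htpos, Nat.cast_nonneg (α := ℝ) k]
  rcases hopninv with hopn0 | ⟨hvopn, hopnconn, hopnphi⟩
  · -- the open set is empty
    refine ⟨parts, ?_, hpair, ?_, ?_, ?_⟩
    · exact fun S hS => ⟨(hprops S hS).1, (hprops S hS).2.1⟩
    · intro v
      have hv : v ∈ (⋃₀ ↑parts) ∪ opn := by rw [hcover]; trivial
      rcases hv with ⟨S, hS, hvS⟩ | hv
      · exact ⟨S, hS, hvS⟩
      · rw [hopn0] at hv; exact absurd hv (Set.notMem_empty v)
    · have h6 : parts.card ≤ (k+1) * n := le_trans hcard (Nat.mul_le_mul_left _ hEn)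
      have h7 : (parts.card : ℝ) ≤ ((k:ℝ)+1) * n := by exact_mod_cast h6
      nlinarith
    · intro S hS h2
      exact le_trans ((hprops S hS).2.2.2 h2) htle
  · -- the open set is nonempty: add it as one more part
    have hopnnot : opn ∉ parts := by
      intro hmem
      have := hopndisj opn hmem
      rw [disjoint_self] at this
      rw [this] at hvopn
      exact hvopn
    refine ⟨insert opn parts, ?_, ?_, ?_, ?_, ?_⟩
    · intro S hS
      rcases Finset.mem_insert.1 hS with hSo | hS
      · exact hSo ▸ ⟨⟨root, hvopn⟩, hopnconn⟩
      · exact ⟨(hprops S hS).1, (hprops S hS).2.1⟩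
    · intro S hS S' hS' hne
      rcases Finset.mem_insert.1 hS with hSo | hS
      · rcases Finset.mem_insert.1 hS' with hSo' | hS'
        · exact absurd (hSo.trans hSo'.symm) hne
        · rw [hSo]; exact hopndisj S' hS'
      · rcases Finset.mem_insert.1 hS' with hSo' | hS'
        · rw [hSo']; exact (hopndisj S hS).symm
        · exact hpair S hS S' hS' hne
    · intro v
      have hv : v ∈ (⋃₀ ↑parts) ∪ opn := by rw [hcover]; trivial
      rcases hv with ⟨S, hS, hvS⟩ | hv
      · exact ⟨S, Finset.mem_insert_of_mem hS, hvS⟩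
      · exact ⟨opn, Finset.mem_insert_self _ _, hv⟩
    · have h6 : parts.card ≤ (k+1) * n := le_trans hcard (Nat.mul_le_mul_left _ hEn)
      have h8 : (insert opn parts).card ≤ (k+1) * n + 1 := by
        have := Finset.card_insert_le opn parts
        omega
      have h7 : ((insert opn parts).card : ℝ) ≤ ((k:ℝ)+1) * n + 1 := by exact_mod_cast h8
      nlinarith
    · intro S hS h2
      rcases Finset.mem_insert.1 hS with hSo | hS
      · rw [hSo]; exact le_trans hopnphi htle
      · exact le_trans ((hprops S hS).2.2.2 h2) htle
end

section
/- Let 1 < p < q < ∞ and let a tree A be given with functions u, w : V(A) → (0, ∞). Suppose for each vertex ξ* there is a linear projection P_{ξ*} : Y_q → P with ‖f − P_{ξ*} f‖_{Y_q(F(ξ))} ≤ c₂ w(ξ) ∑_{ξ* ≤ ξ' ≤ ξ} u(ξ') ‖f‖_{X_p(F(ξ'))} for all ξ ≥ ξ*. Then for any subtree D with minimal vertex ξ*, ‖f − P_{ξ*} f‖_{Y_q(Ω_D)} ≤ c₂ · 𝔖^{p,q}_{D,u,w} · ‖f‖_{X_p(Ω_D)}, where 𝔖^{p,q}_{D,u,w}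 is the norm of the weighted summation operator on D from l_p to l_q. -/
open ENNReal

/-- The norm of the two-weighted summation operator `S_{u,w}` on a partially ordered
vertex set (e.g. a subtree `D` with minimal vertex), from `l_p` to `l_q`: the least
constant `C` with `(∑_ξ (w(ξ) ∑_{ξ'≤ξ} u(ξ') f(ξ'))^q)^{1/q} ≤ C (∑_ξ f(ξ)^p)^{1/p}`. -/
noncomputable def summationNorm {V : Type*} [PartialOrder V]
    (p q : ℝ) (u w : V → ℝ≥0∞) : ℝ≥0∞ :=
  sInf {C : ℝ≥0∞ | ∀ f : V → ℝ≥0∞,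
    (∑' ξ : V, (w ξ * ∑' ξ' : {ξ' : V // ξ' ≤ ξ}, u ξ'.1 * f ξ'.1) ^ q) ^ (1 / q)
      ≤ C * (∑' ξ : V, f ξ ^ p) ^ (1 / p)}

/-- If on a subtree `D` (with vertex set `V`, ordered by the tree order with minimal
vertex `ξ*`) the local estimate
`‖f - P_{ξ*}f‖_{Y_q(F(ξ))} ≤ c₂ w(ξ) ∑_{ξ'≤ξ} u(ξ') ‖f‖_{X_p(F(ξ'))}` holds
(where `b ξ` and `a ξ` denote these piece norms), then by `ℓ_q`- and `ℓ_p`-additivity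
`‖f - P_{ξ*}f‖_{Y_q(Ω_D)} ≤ c₂ · 𝔖^{p,q}_{D,u,w} · ‖f‖_{X_p(Ω_D)}`. -/
theorem summation_operator_bound {V : Type*} [PartialOrder V]
    (p q : ℝ) (hp : 1 < p) (hpq : p < q)
    (u w : V → ℝ≥0∞) (c₂ : ℝ≥0∞) (a b : V → ℝ≥0∞)
    (hb : ∀ ξ : V, b ξ ≤ c₂ * w ξ * ∑' ξ' : {ξ' : V // ξ' ≤ ξ}, u ξ'.1 * a ξ'.1) :
    (∑' ξ : V, b ξ ^ q) ^ (1 / q) ≤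
      c₂ * summationNorm p q u w * (∑' ξ : V, a ξ ^ p) ^ (1 / p) := by
  classical
  have hq0 : (0:ℝ) < q := lt_trans (lt_trans one_pos hp) hpq
  have hp0 : (0:ℝ) < p := lt_trans one_pos hp
  have hq0' : (0:ℝ) ≤ 1/q := by positivity
  have hp0' : (0:ℝ) ≤ 1/p := by positivity
  set T : Set ℝ≥0∞ := {C : ℝ≥0∞ | ∀ f : V → ℝ≥0∞,
    (∑' ξ : V, (w ξ * ∑' ξ' : {ξ' : V // ξ' ≤ ξ}, u ξ'.1 * f ξ'.1) ^ q) ^ (1 / q)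
      ≤ C * (∑' ξ : V, f ξ ^ p) ^ (1 / p)} with hT
  have hSN : summationNorm p q u w = sInf T := rfl
  set G : ℝ≥0∞ := (∑' ξ : V, (w ξ * ∑' ξ' : {ξ' : V // ξ' ≤ ξ}, u ξ'.1 * a ξ'.1) ^ q) ^ (1/q)
    with hG
  set X : ℝ≥0∞ := (∑' ξ : V, a ξ ^ p) ^ (1/p) with hX
  set L : ℝ≥0∞ := (∑' ξ : V, b ξ ^ q) ^ (1/q) with hL
  -- Step A : L ≤ c₂ * G
  have hA : L ≤ c₂ * G := by
    have h1 : ∀ ξ, b ξ ^ q ≤ c₂ ^ q *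
        (w ξ * ∑' ξ' : {ξ' : V // ξ' ≤ ξ}, u ξ'.1 * a ξ'.1) ^ q := by
      intro ξ
      calc b ξ ^ q ≤ (c₂ * (w ξ * ∑' ξ' : {ξ' : V // ξ' ≤ ξ}, u ξ'.1 * a ξ'.1)) ^ q := by
            apply ENNReal.rpow_le_rpow _ (le_of_lt hq0)
            rw [← mul_assoc]; exact hb ξ
        _ = c₂ ^ q * (w ξ * ∑' ξ' : {ξ' : V // ξ' ≤ ξ}, u ξ'.1 * a ξ'.1) ^ q :=
            ENNReal.mul_rpow_of_nonneg _ _ (le_of_lt hq0)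
    calc L ≤ (∑' ξ : V, c₂ ^ q *
          (w ξ * ∑' ξ' : {ξ' : V // ξ' ≤ ξ}, u ξ'.1 * a ξ'.1) ^ q) ^ (1/q) :=
          ENNReal.rpow_le_rpow (ENNReal.tsum_le_tsum h1) hq0'
      _ = (c₂ ^ q * ∑' ξ : V,
          (w ξ * ∑' ξ' : {ξ' : V // ξ' ≤ ξ}, u ξ'.1 * a ξ'.1) ^ q) ^ (1/q) := by
          rw [ENNReal.tsum_mul_left]
      _ = (c₂ ^ q) ^ (1/q) * G :=
          ENNReal.mul_rpow_of_nonneg _ _ hq0'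
      _ = c₂ * G := by
          rw [← ENNReal.rpow_mul, mul_one_div_cancel (ne_of_gt hq0), ENNReal.rpow_one]
  -- Step B : for all C in T, G ≤ C * X
  have hB : ∀ C ∈ T, G ≤ C * X := fun C hC => hC a
  by_cases h0 : sInf T = 0
  · -- all products w ξ * u ξ' with ξ' ≤ ξ vanish
    have hwu : ∀ ξ ξ' : V, ξ' ≤ ξ → w ξ * u ξ' = 0 := by
      intro ξ ξ' hle
      have key : w ξ * u ξ' ≤ sInf T := by
        apply le_sInf
        intro C hC
        have hf := hC (fun v => if v = ξ' then 1 else 0)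
        have hXf : (∑' v : V, (if v = ξ' then (1:ℝ≥0∞) else 0) ^ p) = 1 := by
          have : ∀ v : V, (if v = ξ' then (1:ℝ≥0∞) else 0) ^ p
              = (if v = ξ' then (1:ℝ≥0∞) else 0) := by
            intro v
            by_cases h : v = ξ' <;> simp [h, ENNReal.zero_rpow_of_pos hp0]
          rw [tsum_congr this, tsum_ite_eq]
        rw [hXf, ENNReal.one_rpow, mul_one] at hf
        refine le_trans ?_ hf
        have hterm : w ξ * u ξ' ≤
            w ξ * ∑' σ : {σ : V // σ ≤ ξ}, u σ.1 * (if σ.1 = ξ' then (1:ℝ≥0∞) else 0) := by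
          apply mul_le_mul_right
          have := ENNReal.le_tsum (f := fun σ : {σ : V // σ ≤ ξ} =>
            u σ.1 * (if σ.1 = ξ' then (1:ℝ≥0∞) else 0)) ⟨ξ', hle⟩
          simpa using this
        calc w ξ * u ξ' = ((w ξ * u ξ') ^ q) ^ (1/q) := by
              rw [← ENNReal.rpow_mul, mul_one_div_cancel (ne_of_gt hq0), ENNReal.rpow_one]
          _ ≤ ((w ξ * ∑' σ : {σ : V // σ ≤ ξ}, u σ.1
                * (if σ.1 = ξ' then (1:ℝ≥0∞) else 0)) ^ q) ^ (1/q) :=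
              ENNReal.rpow_le_rpow (ENNReal.rpow_le_rpow hterm (le_of_lt hq0)) hq0'
          _ ≤ (∑' τ : V, (w τ * ∑' σ : {σ : V // σ ≤ τ}, u σ.1
                * (if σ.1 = ξ' then (1:ℝ≥0∞) else 0)) ^ q) ^ (1/q) :=
              ENNReal.rpow_le_rpow (ENNReal.le_tsum ξ) hq0'
      rw [h0] at key
      exact le_antisymm key zero_le
    have hG0 : G = 0 := by
      have hinner : ∀ ξ : V,
          w ξ * ∑' ξ' : {ξ' : V // ξ' ≤ ξ}, u ξ'.1 * a ξ'.1 = 0 := by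
        intro ξ
        rw [← ENNReal.tsum_mul_left]
        have : ∀ σ : {σ : V // σ ≤ ξ}, w ξ * (u σ.1 * a σ.1) = 0 := by
          intro σ
          rw [← mul_assoc, hwu ξ σ.1 σ.2, zero_mul]
        rw [tsum_congr this, tsum_zero]
      rw [hG, tsum_congr (fun ξ => by rw [hinner ξ, ENNReal.zero_rpow_of_pos hq0]),
        tsum_zero, ENNReal.zero_rpow_of_pos (by positivity)]
    have : L ≤ 0 := by
      calc L ≤ c₂ * G := hA
        _ = 0 := by rw [hG0, mul_zero]
    exact le_trans this zero_le
  · by_cases hX0 : X = 0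
    · -- a ≡ 0, hence b ≡ 0
      have ha : ∀ ξ, a ξ = 0 := by
        intro ξ
        have hsum : (∑' ξ : V, a ξ ^ p) = 0 := by
          by_contra h
          have := (rpow_eq_zero_iff (x := ∑' ξ : V, a ξ ^ p) (y := 1/p)).mp hX0
          rcases this with ⟨h1, _⟩ | ⟨_, h2⟩
          · exact h h1
          · linarith
        have : a ξ ^ p = 0 :=
          le_antisymm (hsum ▸ ENNReal.le_tsum ξ) zero_le
        rcases (rpow_eq_zero_iff.mp this) with ⟨h1, _⟩ | ⟨h1, h2⟩
        · exact h1
        · linarith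
      have hbz : ∀ ξ, b ξ = 0 := by
        intro ξ
        have := hb ξ
        simp only [ha, mul_zero, tsum_zero] at this
        exact le_antisymm this zero_le
      have hL0 : L = 0 := by
        rw [hL, tsum_congr (fun ξ => by rw [hbz ξ, ENNReal.zero_rpow_of_pos hq0]),
          tsum_zero, ENNReal.zero_rpow_of_pos (by positivity)]
      rw [hL0] at *
      exact zero_le
    · by_cases hXt : X = ⊤
      · by_cases hc0 : c₂ = 0
        · have : L ≤ 0 := by
            calc L ≤ c₂ * G := hA
              _ = 0 := by rw [hc0, zero_mul]
          exact le_trans this zero_le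
        · have : c₂ * summationNorm p q u w * X = ⊤ := by
            rw [hXt]
            exact ENNReal.mul_top (by
              rw [hSN]
              exact mul_ne_zero hc0 h0)
          rw [this]
          exact le_top
      · -- X finite and nonzero
        have hGle : G ≤ sInf T * X := by
          rw [← ENNReal.div_le_iff_le_mul (Or.inl hX0) (Or.inl hXt)]
          apply le_sInf
          intro C hC
          rw [ENNReal.div_le_iff_le_mul (Or.inl hX0) (Or.inl hXt)]
          exact hB C hC
        calc L ≤ c₂ * G := hA
          _ ≤ c₂ * (sInf T * X) := mul_le_mul_right hGle _
          _ = c₂ * summationNorm p q u w * X := by rw [hSN, mul_assoc]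
end
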